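/- Let p be a prime with p ∉ {2, 3, 5} (equivalently, an odd prime of good reduction for the curve of conductor 15). Then 8 divides the number of points of the reduction of E₁ modulo p, i.e. 8 ∣ #E₁(𝔽_p). -/

import Mathlib

/-- The reduction modulo `p` of the elliptic curve
`E₁ : y² + xy + y = x³ + x² − 10x − 10` (Cremona label 15A1), i.e. the Weierstrass
curve over `𝔽_p = ZMod p` with coefficients `a₁ = 1`, `a₂ = 1`, `a₃ = 1`, `a₄ = −10`,
`a₆ = −10`. -/
def E₁mod (p : ℕ) : WeierstrassCurve.Affine (ZMod p) :=
  { a₁ := 1, a₂ := 1, a₃ := 1, a₄ := -10, a₆ := -10 }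

open WeierstrassCurve.Affine WeierstrassCurve.Affine.Point

private lemma some_congr' {F : Type*} [Field F] {W : WeierstrassCurve.Affine F}
    {x y x' y' : F} (h : W.Nonsingular x y) (h' : W.Nonsingular x' y')
    (hx : x = x') (hy : y = y') :
    WeierstrassCurve.Affine.Point.some _ _ h = WeierstrassCurve.Affine.Point.some _ _ h' := by
  subst hx; subst hy; rfl

/-- For any prime `p ∉ {2, 3, 5}` (i.e. any odd prime of good reduction of the curve of
conductor 15), `8` divides the number of points of the reduction of `E₁` modulo `p`. -/
theorem eight_dvd_card_E₁_mod_p (p : ℕ) (hp : p.Prime) (hp2 : p ≠ 2) (hp3 : p ≠ 3)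
    (hp5 : p ≠ 5) : 8 ∣ Nat.card (E₁mod p).Point := by
  haveI : Fact p.Prime := ⟨hp⟩
  have key : ∀ a b c : ℕ, ((2^a*3^b*5^c : ℕ) : ZMod p) ≠ 0 := by
    intro a b c h
    rw [ZMod.natCast_eq_zero_iff] at h
    rcases (Nat.Prime.dvd_mul hp).mp h with h' | h'
    · rcases (Nat.Prime.dvd_mul hp).mp h' with h'' | h''
      · exact hp2 ((Nat.prime_dvd_prime_iff_eq hp (by norm_num)).mp (hp.dvd_of_dvd_pow h''))
      · exact hp3 ((Nat.prime_dvd_prime_iff_eq hp (by norm_num)).mp (hp.dvd_of_dvd_pow h''))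
    · exact hp5 ((Nat.prime_dvd_prime_iff_eq hp (by norm_num)).mp (hp.dvd_of_dvd_pow h'))
  have h2 : (2 : ZMod p) ≠ 0 := by have := key 1 0 0; norm_num at this; exact this
  have h3 : (3 : ZMod p) ≠ 0 := by have := key 0 1 0; norm_num at this; exact this
  have h5 : (5 : ZMod p) ≠ 0 := by have := key 0 0 1; norm_num at this; exact this
  have h4 : (4 : ZMod p) ≠ 0 := by have := key 2 0 0; norm_num at this; exact this
  have h8 : (8 : ZMod p) ≠ 0 := by have := key 3 0 0; norm_num at this; exact this
  have h25 : (25 : ZMod p) ≠ 0 := by have := key 0 0 2; norm_num at this; exact this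
  have h7200 : (7200 : ZMod p) ≠ 0 := by have := key 5 2 2; norm_num at this; exact this
  -- the four nonsingular points
  have hP : (E₁mod p).Nonsingular (-2) 3 := by
    rw [nonsingular_iff, equation_iff]
    refine ⟨by simp only [E₁mod]; norm_num, Or.inr ?_⟩
    simp only [E₁mod]
    intro h; exact h5 (by linear_combination h)
  have hQ : (E₁mod p).Nonsingular 3 (-2) := by
    rw [nonsingular_iff, equation_iff]
    refine ⟨by simp only [E₁mod]; norm_num, Or.inl ?_⟩
    simp only [E₁mod]
    intro h; exact h25 (by linear_combination -h)
  have hR : (E₁mod p).Nonsingular (-2) (-2) := by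
    rw [nonsingular_iff, equation_iff]
    refine ⟨by simp only [E₁mod]; norm_num, Or.inr ?_⟩
    simp only [E₁mod]
    intro h; exact h5 (by linear_combination -h)
  have hT : (E₁mod p).Nonsingular (-13/4) (9/8) := by
    rw [nonsingular_iff, equation_iff]
    constructor
    · simp only [E₁mod]
      field_simp
      ring
    · refine Or.inl ?_
      simp only [E₁mod]
      intro h
      apply h7200
      field_simp at h
      linear_combination -4 * h
  set P : (E₁mod p).Point := WeierstrassCurve.Affine.Point.some _ _ hP with hPdef
  set Q : (E₁mod p).Point := WeierstrassCurve.Affine.Point.some _ _ hQ with hQdef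
  set R : (E₁mod p).Point := WeierstrassCurve.Affine.Point.some _ _ hR with hRdef
  set T : (E₁mod p).Point := WeierstrassCurve.Affine.Point.some _ _ hT with hTdef
  -- group computations
  have hyPP : (3 : ZMod p) ≠ (E₁mod p).negY (-2) 3 := by
    simp only [negY, E₁mod]
    intro h; exact h5 (by linear_combination h)
  have hsPP : (E₁mod p).slope (-2) (-2) 3 3 = -1 := by
    rw [slope_of_Y_ne rfl hyPP]
    simp only [negY, E₁mod]
    rw [div_eq_iff (by intro h; exact h5 (by linear_combination h))]
    ring
  have hPP : P + P = Q := by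
    rw [hPdef, hQdef, add_self_of_Y_ne hyPP]
    refine some_congr' _ _ ?_ ?_
    · simp only [addX, hsPP]; simp only [E₁mod]; norm_num
    · simp only [addY, negAddY, addX, negY, hsPP]; simp only [E₁mod]; norm_num
  have hxQP : (3 : ZMod p) ≠ -2 := by
    intro h; exact h5 (by linear_combination h)
  have hsQP : (E₁mod p).slope 3 (-2) (-2) 3 = -1 := by
    rw [slope_of_X_ne hxQP]
    rw [div_eq_iff (by intro h; exact h5 (by linear_combination h))]
    ring
  have hQP : Q + P = R := by
    rw [hPdef, hQdef, hRdef, add_of_X_ne hxQP]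
    refine some_congr' _ _ ?_ ?_
    · simp only [addX, hsQP]; simp only [E₁mod]; norm_num
    · simp only [addY, negAddY, addX, negY, hsQP]; simp only [E₁mod]; norm_num
  have hRP : R + P = 0 := by
    rw [hPdef, hRdef, add_of_Y_eq rfl (by simp only [negY, E₁mod]; norm_num)]
  have hTT : T + T = 0 := by
    rw [hTdef, add_self_of_Y_eq (by simp only [negY, E₁mod]; field_simp; ring)]
  have e2 : (2 : ℤ) • P = Q := by rw [two_zsmul, hPP]
  have e3 : (3 : ℤ) • P = R := by
    rw [show (3 : ℤ) = 2 + 1 from rfl, add_zsmul, e2, one_zsmul, hQP]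
  have e4 : (4 : ℤ) • P = 0 := by
    rw [show (4 : ℤ) = 3 + 1 from rfl, add_zsmul, e3, one_zsmul, hRP]
  -- the homomorphism from ZMod 4 × ZMod 2
  let fP : ZMod 4 →+ (E₁mod p).Point :=
    ZMod.lift 4 ⟨zmultiplesHom _ P, by simpa using e4⟩
  let fT : ZMod 2 →+ (E₁mod p).Point :=
    ZMod.lift 2 ⟨zmultiplesHom _ T, by simpa [two_zsmul] using hTT⟩
  let f : ZMod 4 × ZMod 2 →+ (E₁mod p).Point := fP.coprod fT
  have hfP : ∀ k : ℤ, fP ((k : ℤ) : ZMod 4) = k • P := fun k => by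
    rw [show fP = ZMod.lift 4 ⟨zmultiplesHom _ P, by simpa using e4⟩ from rfl, ZMod.lift_coe]; simp [zmultiplesHom_apply]
  have hfT : ∀ k : ℤ, fT ((k : ℤ) : ZMod 2) = k • T := fun k => by
    rw [show fT = ZMod.lift 2 ⟨zmultiplesHom _ T, by simpa [two_zsmul] using hTT⟩ from rfl, ZMod.lift_coe]; simp [zmultiplesHom_apply]
  have hinj : Function.Injective f := by
    rw [injective_iff_map_eq_zero]
    rintro ⟨a, b⟩ hab
    have ha : ((a.val : ℤ) : ZMod 4) = a := by push_cast; exact ZMod.natCast_zmod_val a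
    have hb : ((b.val : ℤ) : ZMod 2) = b := by push_cast; exact ZMod.natCast_zmod_val b
    rw [show f (a, b) = fP a + fT b from rfl, ← ha, ← hb, hfP, hfT] at hab
    have hxT1 : T ≠ -P := by
      rw [hTdef, hPdef, neg_some]
      intro h
      rw [WeierstrassCurve.Affine.Point.some.injEq] at h
      exact h5 (by field_simp at h; linear_combination -h.1)
    have hxT2 : T ≠ -Q := by
      rw [hTdef, hQdef, neg_some]
      intro h
      rw [WeierstrassCurve.Affine.Point.some.injEq] at h
      exact h25 (by field_simp at h; linear_combination -h.1)
    have hxT3 : T ≠ -R := by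
      rw [hTdef, hRdef, neg_some]
      intro h
      rw [WeierstrassCurve.Affine.Point.some.injEq] at h
      exact h5 (by field_simp at h; linear_combination -h.1)
    have hca : a.val = 0 ∨ a.val = 1 ∨ a.val = 2 ∨ a.val = 3 := by
      have := a.val_lt; omega
    have hcb : b.val = 0 ∨ b.val = 1 := by
      have := b.val_lt; omega
    have hgoal : a.val = 0 → b.val = 0 → (a, b) = 0 := by
      intro ha0 hb0
      have : a = 0 := by rw [← ha, ha0]; norm_num
      have hbz : b = 0 := by rw [← hb, hb0]; norm_num
      simp [this, hbz, Prod.ext_iff]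
    rcases hca with ha0 | ha0 | ha0 | ha0 <;> rcases hcb with hb0 | hb0 <;>
        rw [ha0, hb0] at hab <;> push_cast at hab
    · exact hgoal ‹_› ‹_›
    · rw [zero_zsmul, one_zsmul, zero_add] at hab
      exact absurd hab (by rw [hTdef]; exact some_ne_zero hT)
    · rw [one_zsmul, zero_zsmul, add_zero] at hab
      exact absurd hab (by rw [hPdef]; exact some_ne_zero hP)
    · rw [one_zsmul, one_zsmul] at hab
      exact absurd (eq_neg_of_add_eq_zero_right hab) hxT1
    · rw [e2, zero_zsmul, add_zero] at hab
      exact absurd hab (by rw [hQdef]; exact some_ne_zero hQ)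
    · rw [e2, one_zsmul] at hab
      exact absurd (eq_neg_of_add_eq_zero_right hab) hxT2
    · rw [e3, zero_zsmul, add_zero] at hab
      exact absurd hab (by rw [hRdef]; exact some_ne_zero hR)
    · rw [e3, one_zsmul] at hab
      exact absurd (eq_neg_of_add_eq_zero_right hab) hxT3
  have := AddSubgroup.card_dvd_of_injective f hinj
  simpa [Nat.card_prod, Nat.card_zmod] using this
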